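/- (Ross) A bipartite simple graph H = (X,Y,E), with every edge joining X to Y, is a difference graph if and only if H admits a bipartite creation sequence presentation, i.e., there is an enumeration v_1, v_2, …, v_n of all its vertices and labels c_1, …, c_n ∈ {0,1} such that X = {v_i : c_i = 1}, Y = {v_i : c_i = 0}, and for all 1 ≤ i < j ≤ n, v_i is adjacent to v_j if and only if c_i = 0 and c_j = 1. -/

import Mathlib

/-- (Ross) A bipartite simple graph `H` with parts `X`, `Y` (disjoint, covering all
vertices, every edge joining `X` to `Y`) is a difference graph — i.e. admits weights
`φ` and a threshold `α` with `x ∼ y ↔ φ x + φ y ≥ α` for `x ∈ X`, `y ∈ Y` — if and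
only if it admits a bipartite creation sequence presentation: an enumeration
`e 0, …, e (n-1)` of all vertices with labels `c i ∈ {0,1}` such that
`X = {v : c v = 1}`, `Y = {v : c v = 0}`, and for `i < j`, `e i ∼ e j` iff
`c i = 0` and `c j = 1`. -/
theorem difference_iff_bipartite_creation_sequence (V : Type*) [Fintype V]
    (H : SimpleGraph V) (X Y : Set V) (hdisj : Disjoint X Y)
    (hcover : X ∪ Y = Set.univ)
    (hbip : ∀ u v : V, H.Adj u v → (u ∈ X ∧ v ∈ Y) ∨ (u ∈ Y ∧ v ∈ X)) :
    (∃ (φ : V → ℝ) (α : ℝ), ∀ x ∈ X, ∀ y ∈ Y, (H.Adj x y ↔ α ≤ φ x + φ y)) ↔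
      ∃ (e : Fin (Fintype.card V) ≃ V) (c : Fin (Fintype.card V) → Bool),
        X = {v : V | c (e.symm v) = true} ∧
        Y = {v : V | c (e.symm v) = false} ∧
        ∀ i j : Fin (Fintype.card V), i < j →
          (H.Adj (e i) (e j) ↔ (c i = false ∧ c j = true)) := by
  classical
  have hmem : ∀ v : V, v ∈ X ∨ v ∈ Y := by
    intro v
    have : v ∈ X ∪ Y := by rw [hcover]; exact Set.mem_univ v
    exact this
  have hnXY : ∀ v : V, v ∉ X ↔ v ∈ Y := by
    intro v
    constructor
    · intro h; rcases hmem v with h' | h'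
      · exact absurd h' h
      · exact h'
    · intro h hX
      exact (Set.disjoint_left.mp hdisj hX) h
  constructor
  · rintro ⟨φ, α, hφ⟩
    set n := Fintype.card V with hn
    let e0 : Fin n ≃ V := (Fintype.equivFin V).symm
    let f : V → ℝ := fun v => if v ∈ X then φ v else α - φ v
    let g : V → Bool := fun v => if v ∈ X then true else false
    let key : Fin n → ℝ ×ₗ Bool := fun i => toLex (f (e0 i), g (e0 i))
    let σ := Tuple.sort key
    have hmono : Monotone (key ∘ σ) := Tuple.monotone_sort key
    refine ⟨σ.trans e0, fun i => g (e0 (σ i)), ?_, ?_, ?_⟩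
    · ext v
      simp only [Set.mem_setOf_eq, Equiv.symm_trans_apply, Equiv.apply_symm_apply, g]
      by_cases h : v ∈ X <;> simp [h]
    · ext v
      simp only [Set.mem_setOf_eq, Equiv.symm_trans_apply, Equiv.apply_symm_apply, g]
      rw [← hnXY v]
      by_cases h : v ∈ X <;> simp [h]
    · intro i j hij
      have hk : key (σ i) ≤ key (σ j) := hmono hij.le
      rw [Prod.Lex.le_iff] at hk
      simp only [Equiv.trans_apply]
      set u := e0 (σ i) with hu
      set w := e0 (σ j) with hw
      have hXX : ∀ a b : V, a ∈ X → b ∈ X → ¬ H.Adj a b := by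
        intro a b ha hb hadj
        rcases hbip a b hadj with ⟨_, h2⟩ | ⟨h1, _⟩
        · exact (Set.disjoint_left.mp hdisj hb) h2
        · exact (Set.disjoint_left.mp hdisj ha) h1
      have hYY : ∀ a b : V, a ∈ Y → b ∈ Y → ¬ H.Adj a b := by
        intro a b ha hb hadj
        rcases hbip a b hadj with ⟨h1, _⟩ | ⟨_, h2⟩
        · exact (Set.disjoint_left.mp hdisj h1) ha
        · exact (Set.disjoint_left.mp hdisj h2) hb
      rcases hmem u with hue | hue <;> rcases hmem w with hwe | hwe
      · -- both in X
        simp only [g, if_pos hue, if_pos hwe]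
        simp [hXX u w hue hwe]
      · -- u ∈ X, w ∈ Y : need ¬ Adj, RHS false since c i = true
        simp only [g, if_pos hue, if_neg ((hnXY w).mpr hwe : w ∉ X)]
        have hne : ¬ H.Adj u w := by
          intro hadj
          have hle : α ≤ φ u + φ w := (hφ u hue w hwe).mp hadj
          have : f u < f w := by
            rcases hk with h | ⟨h1, h2⟩
            · exact h
            · exfalso
              replace h2 : g u ≤ g w := h2
              simp only [g, if_pos hue, if_neg ((hnXY w).mpr hwe : w ∉ X)] at h2
              exact (by decide : ¬ (true ≤ false)) h2
          simp only [f, if_pos hue, if_neg ((hnXY w).mpr hwe : w ∉ X)] at this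
          linarith
        simp [hne]
      · -- u ∈ Y, w ∈ X : need Adj, RHS true
        simp only [g, if_neg ((hnXY u).mpr hue : u ∉ X), if_pos hwe]
        have hfle : f u ≤ f w := by
          rcases hk with h | ⟨h1, h2⟩
          · exact h.le
          · exact le_of_eq h1
        simp only [f, if_neg ((hnXY u).mpr hue : u ∉ X), if_pos hwe] at hfle
        have : H.Adj w u := (hφ w hwe u hue).mpr (by linarith)
        simp [this.symm]
      · -- both in Y
        simp only [g, if_neg ((hnXY u).mpr hue : u ∉ X),
          if_neg ((hnXY w).mpr hwe : w ∉ X)]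
        simp [hYY u w hue hwe]
  · rintro ⟨e, c, hX, hY, hadj⟩
    refine ⟨fun v => if c (e.symm v) then ((e.symm v : ℕ) : ℝ) else -((e.symm v : ℕ) : ℝ),
      1, ?_⟩
    intro x hx y hy
    have hcx : c (e.symm x) = true := by rw [hX] at hx; exact hx
    have hcy : c (e.symm y) = false := by rw [hY] at hy; exact hy
    simp only [hcx, hcy, if_pos, if_neg, Bool.false_eq_true, if_false, if_true]
    rcases lt_trichotomy (e.symm y) (e.symm x) with h | h | h
    · have h2 := hadj _ _ h
      rw [e.apply_symm_apply, e.apply_symm_apply] at h2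
      have hnat : ((e.symm y : ℕ) : ℝ) + 1 ≤ ((e.symm x : ℕ) : ℝ) := by
        have : (e.symm y : ℕ) < (e.symm x : ℕ) := h
        exact_mod_cast this
      constructor
      · intro _; linarith
      · intro _
        exact (h2.mpr ⟨hcy, hcx⟩).symm
    · exfalso
      have : x = y := by
        have h2 := congrArg e h
        rw [e.apply_symm_apply, e.apply_symm_apply] at h2
        exact h2.symm
      rw [this] at hx
      exact (Set.disjoint_left.mp hdisj hx) hy
    · have h2 := hadj _ _ h
      rw [e.apply_symm_apply, e.apply_symm_apply] at h2
      have hnat : ((e.symm x : ℕ) : ℝ) + 1 ≤ ((e.symm y : ℕ) : ℝ) := by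
        have : (e.symm x : ℕ) < (e.symm y : ℕ) := h
        exact_mod_cast this
      constructor
      · intro hAdj
        have := h2.mp hAdj
        rw [hcx] at this
        exact absurd this.1 (by simp)
      · intro hle; linarith
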